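/- Let X, Y be jointly centred Gaussian real random variables. Then E[X²Y²] = E[X²]E[Y²] + 2(E[XY])². -/

import Mathlib

open MeasureTheory ProbabilityTheory Real
open scoped NNReal ENNReal

namespace IsserlisAux

lemma integrable_pow_mul_exp {b : ℝ} (hb : 0 < b) (n : ℕ) :
    Integrable (fun x : ℝ => x ^ n * Real.exp (-b * x ^ 2)) := by
  have h := integrable_rpow_mul_exp_neg_mul_sq hb (s := (n : ℝ))
    (lt_of_lt_of_le neg_one_lt_zero (Nat.cast_nonneg n))
  simpa [Real.rpow_natCast] using h

lemma moment_rec {b : ℝ} (hb : 0 < b) (k : ℕ) :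
    ∫ x : ℝ, x ^ (k + 2) * Real.exp (-b * x ^ 2)
      = ((k : ℝ) + 1) / (2 * b) * ∫ x : ℝ, x ^ k * Real.exp (-b * x ^ 2) := by
  set f : ℝ → ℝ := fun x => x ^ (k + 1) * Real.exp (-b * x ^ 2) with hf_def
  set f' : ℝ → ℝ := fun x =>
    ((k : ℝ) + 1) * (x ^ k * Real.exp (-b * x ^ 2))
      - (2 * b) * (x ^ (k + 2) * Real.exp (-b * x ^ 2)) with hf'_def
  have hderiv : ∀ x : ℝ, HasDerivAt f (f' x) x := by
    intro x
    have h1 : HasDerivAt (fun x : ℝ => x ^ (k + 1)) (((k : ℝ) + 1) * x ^ k) x := by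
      simpa using hasDerivAt_pow (k + 1) x
    have h2 : HasDerivAt (fun x : ℝ => Real.exp (-b * x ^ 2))
        (Real.exp (-b * x ^ 2) * (-b * (2 * x))) x := by
      have h3 : HasDerivAt (fun x : ℝ => -b * x ^ 2) (-b * (2 * x)) x := by
        simpa using (hasDerivAt_pow 2 x).const_mul (-b)
      exact h3.exp
    have := h1.mul h2
    refine this.congr_deriv ?_
    simp only [hf'_def]
    ring
  have hf' : Integrable f' :=
    ((integrable_pow_mul_exp hb k).const_mul _).sub
      ((integrable_pow_mul_exp hb (k + 2)).const_mul _)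
  have hf : Integrable f := integrable_pow_mul_exp hb (k + 1)
  have h0 : ∫ x, f' x = 0 :=
    integral_eq_zero_of_hasDerivAt_of_integrable hderiv hf' hf
  rw [hf'_def] at h0
  rw [integral_sub ((integrable_pow_mul_exp hb k).const_mul _)
    ((integrable_pow_mul_exp hb (k + 2)).const_mul _),
    integral_const_mul, integral_const_mul] at h0
  have hb' : (2 : ℝ) * b ≠ 0 := by positivity
  rw [div_mul_eq_mul_div, eq_div_iff hb']
  linear_combination -h0

lemma integral_gaussianReal_eq (v : ℝ≥0) (hv : v ≠ 0) (g : ℝ → ℝ) :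
    ∫ x, g x ∂(gaussianReal 0 v) = ∫ x, gaussianPDFReal 0 v x * g x := by
  rw [gaussianReal_of_var_ne_zero 0 hv]
  have hpdf : gaussianPDF 0 v = fun x => ((gaussianPDFReal 0 v x).toNNReal : ℝ≥0∞) := rfl
  rw [hpdf, integral_withDensity_eq_integral_smul
    ((measurable_gaussianPDFReal 0 v).real_toNNReal) g]
  congr 1
  ext x
  simp [NNReal.smul_def, Real.coe_toNNReal _ (gaussianPDFReal_nonneg 0 v x)]

lemma integrable_pow_gaussianReal (v : ℝ≥0) (n : ℕ) :
    Integrable (fun x : ℝ => x ^ n) (gaussianReal 0 v) := by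
  by_cases hv : v = 0
  · rw [hv, gaussianReal_zero_var]
    have h : (fun x : ℝ => x ^ n) =ᵐ[Measure.dirac (0 : ℝ)] fun _ => (0 : ℝ) ^ n := by
      rw [Filter.EventuallyEq, ae_dirac_eq]
      exact Filter.eventually_pure.2 rfl
    exact (integrable_const _).congr h.symm
  · rw [gaussianReal_of_var_ne_zero 0 hv]
    have hpdf : gaussianPDF 0 v = fun x => ((gaussianPDFReal 0 v x).toNNReal : ℝ≥0∞) := rfl
    rw [hpdf, integrable_withDensity_iff_integrable_smul
      ((measurable_gaussianPDFReal 0 v).real_toNNReal)]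
    have hv' : (0 : ℝ) < (v : ℝ) := by positivity
    have hb : (0 : ℝ) < (2 * (v : ℝ))⁻¹ := by positivity
    have : (fun x : ℝ => (gaussianPDFReal 0 v x).toNNReal • x ^ n : ℝ → ℝ)
        = fun x : ℝ => (√(2 * π * v))⁻¹ * (x ^ n * Real.exp (-(2 * (v : ℝ))⁻¹ * x ^ 2)) := by
      ext x
      rw [NNReal.smul_def, Real.coe_toNNReal _ (gaussianPDFReal_nonneg 0 v x), smul_eq_mul]
      simp only [gaussianPDFReal, sub_zero]
      rw [show -x ^ 2 / (2 * (v : ℝ)) = -(2 * (v : ℝ))⁻¹ * x ^ 2 by field_simp]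
      ring
    rw [this]
    exact (integrable_pow_mul_exp hb n).const_mul _

lemma gaussianReal_pow_rec (v : ℝ≥0) (hv : v ≠ 0) (k : ℕ) :
    ∫ x, x ^ (k + 2) ∂(gaussianReal 0 v)
      = ((k : ℝ) + 1) * v * ∫ x, x ^ k ∂(gaussianReal 0 v) := by
  have hv' : (0 : ℝ) < (v : ℝ) := by positivity
  have hb : (0 : ℝ) < (2 * (v : ℝ))⁻¹ := by positivity
  have hrw : ∀ n : ℕ, ∫ x, x ^ n ∂(gaussianReal 0 v)
      = (√(2 * π * v))⁻¹ * ∫ x, x ^ n * Real.exp (-(2 * (v : ℝ))⁻¹ * x ^ 2) := by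
    intro n
    rw [integral_gaussianReal_eq v hv]
    rw [← integral_const_mul]
    congr 1
    ext x
    simp only [gaussianPDFReal, sub_zero]
    rw [show -x ^ 2 / (2 * (v : ℝ)) = -(2 * (v : ℝ))⁻¹ * x ^ 2 by field_simp]
    ring
  rw [hrw (k + 2), hrw k, moment_rec hb k]
  rw [show ((k : ℝ) + 1) / (2 * (2 * (v : ℝ))⁻¹) = ((k : ℝ) + 1) * v by
    field_simp]
  ring

lemma integral_sq_gaussianReal (v : ℝ≥0) :
    ∫ x, x ^ 2 ∂(gaussianReal 0 v) = v := by
  by_cases hv : v = 0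
  · rw [hv, gaussianReal_zero_var, integral_dirac]
    simp
  · have h := gaussianReal_pow_rec v hv 0
    simp only [Nat.cast_zero, zero_add, pow_zero, one_mul] at h
    rw [h]
    simp

lemma integral_fourth_gaussianReal (v : ℝ≥0) :
    ∫ x, x ^ 4 ∂(gaussianReal 0 v) = 3 * (v : ℝ) ^ 2 := by
  by_cases hv : v = 0
  · rw [hv, gaussianReal_zero_var, integral_dirac]
    simp
  · have h := gaussianReal_pow_rec v hv 2
    norm_num at h
    rw [h, integral_sq_gaussianReal]
    ring

lemma gaussian_moments {Ω : Type*} [MeasureSpace Ω] (Z : Ω → ℝ) (hZ : Measurable Z)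
    {v : ℝ≥0} (h : Measure.map Z volume = gaussianReal 0 v) :
    Integrable (fun ω => Z ω ^ 2) ∧ Integrable (fun ω => Z ω ^ 4) ∧
      ∫ ω, Z ω ^ 4 = 3 * (∫ ω, Z ω ^ 2) ^ 2 := by
  have key : ∀ n : ℕ, Integrable (fun ω => Z ω ^ n) ∧
      ∫ ω, Z ω ^ n = ∫ x, x ^ n ∂(gaussianReal 0 v) := by
    intro n
    have hmeas : Measurable fun x : ℝ => x ^ n := measurable_id.pow_const n
    constructor
    · have := (integrable_map_measure (μ := (volume : Measure Ω)) (f := Z)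
        (g := fun x : ℝ => x ^ n) (hmeas.aestronglyMeasurable) hZ.aemeasurable).1
      rw [h] at this
      exact this (integrable_pow_gaussianReal v n)
    · rw [← h, integral_map hZ.aemeasurable hmeas.aestronglyMeasurable]
  refine ⟨(key 2).1, (key 4).1, ?_⟩
  rw [(key 2).2, (key 4).2, integral_sq_gaussianReal, integral_fourth_gaussianReal]

end IsserlisAux

/-- Isserlis' theorem for fourth moments: if `X, Y` are jointly centred Gaussian (i.e. every
linear combination `aX + bY` is a centred Gaussian variable), then
`E[X²Y²] = E[X²] E[Y²] + 2 (E[XY])²`. -/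
theorem isserlis_fourth_moment
    {Ω : Type*} [MeasureSpace Ω] [IsProbabilityMeasure (volume : Measure Ω)]
    (X Y : Ω → ℝ) (hX : Measurable X) (hY : Measurable Y)
    (hGauss : ∀ a b : ℝ, ∃ v : ℝ≥0,
      Measure.map (fun ω => a * X ω + b * Y ω) volume = gaussianReal 0 v) :
    ∫ ω, (X ω) ^ 2 * (Y ω) ^ 2
      = (∫ ω, (X ω) ^ 2) * (∫ ω, (Y ω) ^ 2) + 2 * (∫ ω, X ω * Y ω) ^ 2 := by
  classical
  -- moments of X, Y, X+Y, X-Y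
  obtain ⟨vX, hvX⟩ := hGauss 1 0
  simp only [one_mul, zero_mul, add_zero] at hvX
  obtain ⟨vY, hvY⟩ := hGauss 0 1
  simp only [one_mul, zero_mul, zero_add] at hvY
  obtain ⟨vP, hvP⟩ := hGauss 1 1
  simp only [one_mul] at hvP
  obtain ⟨vM, hvM⟩ := hGauss 1 (-1)
  simp only [one_mul, neg_one_mul, ← sub_eq_add_neg] at hvM
  obtain ⟨hX2, hX4, hXm⟩ := IsserlisAux.gaussian_moments X hX hvX
  obtain ⟨hY2, hY4, hYm⟩ := IsserlisAux.gaussian_moments Y hY hvY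
  obtain ⟨hP2, hP4, hPm⟩ := IsserlisAux.gaussian_moments (fun ω => X ω + Y ω) (hX.add hY) hvP
  obtain ⟨hM2, hM4, hMm⟩ := IsserlisAux.gaussian_moments (fun ω => X ω - Y ω) (hX.sub hY) hvM
  -- integrability of cross terms
  have hXY : Integrable (fun ω => X ω * Y ω) := by
    refine (hX2.add hY2).mono ((hX.mul hY).aestronglyMeasurable) (ae_of_all _ fun ω => ?_)
    have h1 : |X ω| * |Y ω| ≤ X ω ^ 2 + Y ω ^ 2 := by
      nlinarith [sq_nonneg (|X ω| - |Y ω|), sq_abs (X ω), sq_abs (Y ω), abs_nonneg (X ω),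
        abs_nonneg (Y ω)]
    have h2 : (0:ℝ) ≤ X ω ^ 2 + Y ω ^ 2 := by positivity
    simpa [Real.norm_eq_abs, abs_mul, abs_of_nonneg h2] using h1
  have hX2Y2 : Integrable (fun ω => X ω ^ 2 * Y ω ^ 2) := by
    refine (hX4.add hY4).mono ((hX.pow_const 2).mul (hY.pow_const 2)).aestronglyMeasurable
      (ae_of_all _ fun ω => ?_)
    have h1 : X ω ^ 2 * Y ω ^ 2 ≤ X ω ^ 4 + Y ω ^ 4 := by
      nlinarith [sq_nonneg (X ω ^ 2 - Y ω ^ 2)]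
    have h2 : (0:ℝ) ≤ X ω ^ 4 + Y ω ^ 4 := by positivity
    have h3 : (0:ℝ) ≤ X ω ^ 2 * Y ω ^ 2 := by positivity
    simpa [Real.norm_eq_abs, abs_of_nonneg h2, abs_of_nonneg h3] using h1
  -- second moment expansions
  have eP2 : ∫ ω, (X ω + Y ω) ^ 2
      = (∫ ω, X ω ^ 2) + 2 * (∫ ω, X ω * Y ω) + ∫ ω, Y ω ^ 2 := by
    have h : ∀ ω, (X ω + Y ω) ^ 2 = X ω ^ 2 + 2 * (X ω * Y ω) + Y ω ^ 2 := fun ω => by ring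
    have hI1 : Integrable (fun ω => 2 * (X ω * Y ω)) := hXY.const_mul 2
    have hI2 : Integrable (fun ω => X ω ^ 2 + 2 * (X ω * Y ω)) := hX2.add hI1
    simp_rw [h]
    rw [integral_add hI2 hY2, integral_add hX2 hI1, integral_const_mul]
  have eM2 : ∫ ω, (X ω - Y ω) ^ 2
      = (∫ ω, X ω ^ 2) - 2 * (∫ ω, X ω * Y ω) + ∫ ω, Y ω ^ 2 := by
    have h : ∀ ω, (X ω - Y ω) ^ 2 = X ω ^ 2 - 2 * (X ω * Y ω) + Y ω ^ 2 := fun ω => by ring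
    have hI1 : Integrable (fun ω => 2 * (X ω * Y ω)) := hXY.const_mul 2
    have hI2 : Integrable (fun ω => X ω ^ 2 - 2 * (X ω * Y ω)) := hX2.sub hI1
    simp_rw [h]
    rw [integral_add hI2 hY2, integral_sub hX2 hI1, integral_const_mul]
  -- fourth moment sum expansion
  have e4 : (∫ ω, (X ω + Y ω) ^ 4) + (∫ ω, (X ω - Y ω) ^ 4)
      = 2 * (∫ ω, X ω ^ 4) + 12 * (∫ ω, X ω ^ 2 * Y ω ^ 2) + 2 * (∫ ω, Y ω ^ 4) := by
    rw [← integral_add hP4 hM4]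
    have h : ∀ ω, (X ω + Y ω) ^ 4 + (X ω - Y ω) ^ 4
        = 2 * X ω ^ 4 + 12 * (X ω ^ 2 * Y ω ^ 2) + 2 * Y ω ^ 4 := fun ω => by ring
    have hI1 : Integrable (fun ω => 2 * X ω ^ 4) := hX4.const_mul 2
    have hI2 : Integrable (fun ω => 12 * (X ω ^ 2 * Y ω ^ 2)) := hX2Y2.const_mul 12
    have hI3 : Integrable (fun ω => 2 * X ω ^ 4 + 12 * (X ω ^ 2 * Y ω ^ 2)) := hI1.add hI2
    have hI4 : Integrable (fun ω => 2 * Y ω ^ 4) := hY4.const_mul 2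
    simp_rw [h]
    rw [integral_add hI3 hI4, integral_add hI1 hI2,
      integral_const_mul, integral_const_mul, integral_const_mul]
  -- combine
  rw [hPm, hMm, eP2, eM2, hXm, hYm] at e4
  linear_combination -e4 / 12
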